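/- Let p ∈ (2,6) and β = (p−2)/(6−p). There exists C_p > 0, depending only on p, such that for every star graph G with at least one half-line (m ≥ 1), every μ > 0 and every ground state u of mass μ on G, the Lagrange multiplier λ := μ^{-1}(‖u‖^p_{L^p(G)} − ‖u′‖²_{L²(G)}) satisfies C_p^{-1} μ^{2β} ≤ λ ≤ C_p μ^{2β}. -/

import Mathlib

open MeasureTheory Filter Set

noncomputable section

/-- `H1R p f f'` : `f : ℝ → ℝ` is an `H¹` function on `ℝ`, with weak derivative `f'`
(encoded via the absolutely continuous representative and the fundamental theorem
of calculus), and moreover `|f|^p` is integrable (so that the NLS energy is finite). -/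
def H1R (p : ℝ) (f f' : ℝ → ℝ) : Prop :=
  Continuous f ∧
  (∀ x y : ℝ, IntervalIntegrable f' volume x y) ∧
  (∀ x y : ℝ, f y = f x + ∫ t in x..y, f' t) ∧
  Integrable (fun x => (f x) ^ 2) ∧
  Integrable (fun x => |f x| ^ p) ∧
  Integrable (fun x => (f' x) ^ 2)

/-- The NLS energy `E(f, ℝ) = ½∫|f'|² − (1/p)∫|f|^p` on the line. -/
def energyR (p : ℝ) (f f' : ℝ → ℝ) : ℝ :=
  (1 / 2) * (∫ x, (f' x) ^ 2) - (1 / p) * ∫ x, |f x| ^ p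

/-- The ground-state energy level `E_ℝ(μ)` on the line. -/
def levelR (p μ : ℝ) : ℝ :=
  sInf { e | ∃ f f' : ℝ → ℝ, H1R p f f' ∧ (∫ x, (f x) ^ 2) = μ ∧ e = energyR p f f' }

/-- `H1HalfLine p f f'` : `f` is an `H¹` function on the half-line `[0, ∞)`,
with weak derivative `f'`. -/
def H1HalfLine (p : ℝ) (f f' : ℝ → ℝ) : Prop :=
  ContinuousOn f (Ici 0) ∧
  (∀ x y : ℝ, 0 ≤ x → 0 ≤ y → IntervalIntegrable f' volume x y) ∧
  (∀ x y : ℝ, 0 ≤ x → 0 ≤ y → f y = f x + ∫ t in x..y, f' t) ∧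
  IntegrableOn (fun x => (f x) ^ 2) (Ioi 0) ∧
  IntegrableOn (fun x => |f x| ^ p) (Ioi 0) ∧
  IntegrableOn (fun x => (f' x) ^ 2) (Ioi 0)

/-- The NLS energy on the half-line. -/
def energyHL (p : ℝ) (f f' : ℝ → ℝ) : ℝ :=
  (1 / 2) * (∫ x in Ioi (0:ℝ), (f' x) ^ 2) - (1 / p) * ∫ x in Ioi (0:ℝ), |f x| ^ p

/-- The ground-state energy level `E_{ℝ⁺}(μ)` on the half-line. -/
def levelHL (p μ : ℝ) : ℝ :=
  sInf { e | ∃ f f' : ℝ → ℝ, H1HalfLine p f f' ∧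
    (∫ x in Ioi (0:ℝ), (f x) ^ 2) = μ ∧ e = energyHL p f f' }

/-- `H1Edge p ℓ g g'` : `g` is an `H¹` function on the finite edge `[0, ℓ]`,
with weak derivative `g'`. -/
def H1Edge (p ℓ : ℝ) (g g' : ℝ → ℝ) : Prop :=
  ContinuousOn g (Icc 0 ℓ) ∧
  (∀ x ∈ Icc 0 ℓ, ∀ y ∈ Icc 0 ℓ, IntervalIntegrable g' volume x y) ∧
  (∀ x ∈ Icc 0 ℓ, ∀ y ∈ Icc 0 ℓ, g y = g x + ∫ t in x..y, g' t) ∧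
  IntegrableOn (fun x => (g x) ^ 2) (Ioo 0 ℓ) ∧
  IntegrableOn (fun x => |g x| ^ p) (Ioo 0 ℓ) ∧
  IntegrableOn (fun x => (g' x) ^ 2) (Ioo 0 ℓ)

/-- A star graph: `m` half-lines and `k` finite edges of lengths `ℓ j > 0`,
all emanating from a single vertex (sitting at coordinate `0` of every edge). -/
structure StarGraph where
  m : ℕ
  k : ℕ
  ℓ : Fin k → ℝ
  ℓ_pos : ∀ j, 0 < ℓ j

/-- A function on a star graph `G`, given by its components on the half-lines
(`f i`, for `i : Fin G.m`) and on the finite edges (`g j`, for `j : Fin G.k`),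
together with chosen (weak) derivatives `f' i`, `g' j`. -/
structure GraphFun (G : StarGraph) where
  f : Fin G.m → ℝ → ℝ
  f' : Fin G.m → ℝ → ℝ
  g : Fin G.k → ℝ → ℝ
  g' : Fin G.k → ℝ → ℝ

/-- Membership in `H¹(G)`: every component is `H¹` on its edge, and all components
agree at the common vertex. -/
def InH1G (p : ℝ) (G : StarGraph) (u : GraphFun G) : Prop :=
  (∀ i, H1HalfLine p (u.f i) (u.f' i)) ∧
  (∀ j, H1Edge p (G.ℓ j) (u.g j) (u.g' j)) ∧
  (∀ i i', u.f i 0 = u.f i' 0) ∧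
  (∀ i j, u.f i 0 = u.g j 0) ∧
  (∀ j j', u.g j 0 = u.g j' 0)

/-- `‖u‖²_{L²(G)}`, the (squared) mass of `u`. -/
def massG (G : StarGraph) (u : GraphFun G) : ℝ :=
  (∑ i, ∫ x in Ioi (0:ℝ), (u.f i x) ^ 2) + ∑ j, ∫ x in Ioo 0 (G.ℓ j), (u.g j x) ^ 2

/-- `‖u‖^p_{L^p(G)}`. -/
def lpG (p : ℝ) (G : StarGraph) (u : GraphFun G) : ℝ :=
  (∑ i, ∫ x in Ioi (0:ℝ), |u.f i x| ^ p) + ∑ j, ∫ x in Ioo 0 (G.ℓ j), |u.g j x| ^ p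

/-- `‖u'‖²_{L²(G)}`, the (squared) `L²` norm of the derivative. -/
def kinG (G : StarGraph) (u : GraphFun G) : ℝ :=
  (∑ i, ∫ x in Ioi (0:ℝ), (u.f' i x) ^ 2) + ∑ j, ∫ x in Ioo 0 (G.ℓ j), (u.g' j x) ^ 2

/-- The NLS energy `E(u, G) = ½‖u'‖²_{L²(G)} − (1/p)‖u‖^p_{L^p(G)}`. -/
def energyG (p : ℝ) (G : StarGraph) (u : GraphFun G) : ℝ :=
  (1 / 2) * kinG G u - (1 / p) * lpG p G u

/-- `‖u‖_{L^∞(G)}`: the supremum of `|u|` over the whole graph. -/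
def supNormG (G : StarGraph) (u : GraphFun G) : ℝ :=
  sSup ({ y | ∃ i : Fin G.m, ∃ x ≥ (0:ℝ), y = |u.f i x| } ∪
        { y | ∃ j : Fin G.k, ∃ x ∈ Icc 0 (G.ℓ j), y = |u.g j x| })

/-- The ground-state energy level `E_G(μ) = inf {E(u,G) : u ∈ H¹_μ(G)}`. -/
def levelG (p : ℝ) (G : StarGraph) (μ : ℝ) : ℝ :=
  sInf { e | ∃ u : GraphFun G, InH1G p G u ∧ massG G u = μ ∧ e = energyG p G u }

/-- `u` is a ground state of mass `μ` on `G`: it minimizes `E(·, G)` over `H¹_μ(G)`. -/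
def IsGroundState (p : ℝ) (G : StarGraph) (μ : ℝ) (u : GraphFun G) : Prop :=
  InH1G p G u ∧ massG G u = μ ∧
  ∀ v : GraphFun G, InH1G p G v → massG G v = μ → energyG p G u ≤ energyG p G v

/-- Weak `L²(s)` convergence of a sequence of functions, tested against
square-integrable functions on `s`. -/
def WeakL2On (s : Set ℝ) (h : ℕ → ℝ → ℝ) (h₀ : ℝ → ℝ) : Prop :=
  ∀ φ : ℝ → ℝ, IntegrableOn (fun x => (φ x) ^ 2) s →
    Tendsto (fun n => ∫ x in s, h n x * φ x) atTop (nhds (∫ x in s, h₀ x * φ x))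

/-- Componentwise difference of two functions on a star graph. -/
def GraphFun.sub {G : StarGraph} (u v : GraphFun G) : GraphFun G :=
  ⟨fun i x => u.f i x - v.f i x, fun i x => u.f' i x - v.f' i x,
   fun j x => u.g j x - v.g j x, fun j x => u.g' j x - v.g' j x⟩

/-- The star graph obtained from `G` by attaching one additional finite edge of
length `ε` at the vertex. -/
def StarGraph.addEdge (G : StarGraph) (ε : ℝ) (hε : 0 < ε) : StarGraph where
  m := G.m
  k := G.k + 1
  ℓ := Fin.cons ε G.ℓ
  ℓ_pos := by
    intro j
    refine Fin.cases ?_ ?_ j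
    · simpa using hε
    · intro i; simpa using G.ℓ_pos i

-- AUX START

def tf (a σ : ℝ) (x : ℝ) : ℝ := a * (x * Real.exp (-(σ*x)))
def tf' (a σ : ℝ) (x : ℝ) : ℝ := a * ((1 - σ*x) * Real.exp (-(σ*x)))

lemma tf_hasDeriv (a σ x : ℝ) : HasDerivAt (tf a σ) (tf' a σ x) x := by
  have h1 : HasDerivAt (fun x : ℝ => x * Real.exp (-(σ*x)))
      ((1 - σ*x) * Real.exp (-(σ*x))) x := by
    have he : HasDerivAt (fun x : ℝ => Real.exp (-(σ*x))) (-σ * Real.exp (-(σ*x))) x := by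
      have : HasDerivAt (fun x : ℝ => -(σ*x)) (-σ) x := by
        have h := ((hasDerivAt_id x).const_mul σ).neg
        rw [mul_one] at h
        exact h
      simpa [mul_comm] using this.exp
    have := (hasDerivAt_id x).mul he
    exact this.congr_deriv (by simp only [id]; ring)
  exact h1.const_mul a

lemma tf_cont (a σ : ℝ) : Continuous (tf a σ) := by
  unfold tf; continuity

lemma tf'_cont (a σ : ℝ) : Continuous (tf' a σ) := by
  unfold tf'; continuity

lemma tf_ftc (a σ : ℝ) (x y : ℝ) : tf a σ y = tf a σ x + ∫ t in x..y, tf' a σ t := by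
  have := intervalIntegral.integral_eq_sub_of_hasDerivAt
    (f := tf a σ) (f' := tf' a σ) (a := x) (b := y)
    (fun t _ => tf_hasDeriv a σ t) ((tf'_cont a σ).intervalIntegrable x y)
  rw [this]; ring

lemma tf_sq (a σ x : ℝ) : (tf a σ x)^2 = a^2 * (x^2 * Real.exp (-(2*σ*x))) := by
  unfold tf
  rw [mul_pow, mul_pow, ← Real.exp_nat_mul]
  ring_nf

lemma tf'_sq (a σ x : ℝ) : (tf' a σ x)^2
    = a^2 * (Real.exp (-(2*σ*x)) - 2*σ*(x*Real.exp (-(2*σ*x))) + σ^2*(x^2*Real.exp (-(2*σ*x)))) := by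
  unfold tf'
  rw [mul_pow, mul_pow, ← Real.exp_nat_mul]
  ring_nf

lemma Jinteg' {s b : ℝ} (hs : -1 < s) (hb : 0 < b) :
    IntegrableOn (fun x => x ^ s * Real.exp (-(b*x))) (Ioi (0:ℝ)) := by
  have h := integrableOn_rpow_mul_exp_neg_mul_rpow hs one_pos hb
  refine h.congr_fun (fun x hx => ?_) measurableSet_Ioi
  simp only [Real.rpow_one, neg_mul]

lemma Jval' {s b : ℝ} (hs : -1 < s) (hb : 0 < b) :
    ∫ x in Ioi (0:ℝ), x ^ s * Real.exp (-(b*x)) = (1/b) ^ (s+1) * Real.Gamma (s+1) := by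
  have := Real.integral_rpow_mul_exp_neg_mul_Ioi (a := s+1) (r := b) (by linarith) hb
  simpa using this

lemma Jinteg_nat' {n : ℕ} {b : ℝ} (hb : 0 < b) :
    IntegrableOn (fun x => x ^ n * Real.exp (-(b*x))) (Ioi (0:ℝ)) := by
  refine (Jinteg' (s := (n:ℝ)) (by exact_mod_cast neg_one_lt_zero.trans_le n.cast_nonneg) hb).congr_fun
    (fun x hx => ?_) measurableSet_Ioi
  simp only [Real.rpow_natCast]

lemma Jval_nat' {n : ℕ} {b : ℝ} (hb : 0 < b) :
    ∫ x in Ioi (0:ℝ), x ^ n * Real.exp (-(b*x)) = (1/b) ^ (n+1) * (n.factorial : ℝ) := by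
  have h1 : ∫ x in Ioi (0:ℝ), x ^ n * Real.exp (-(b*x))
      = ∫ x in Ioi (0:ℝ), x ^ (n:ℝ) * Real.exp (-(b*x)) := by
    refine setIntegral_congr_fun measurableSet_Ioi (fun x hx => ?_)
    rw [Real.rpow_natCast]
  rw [h1, Jval' (by exact_mod_cast neg_one_lt_zero.trans_le n.cast_nonneg) hb]
  have h2 : ((n:ℝ)+1) = ((n+1 : ℕ) : ℝ) := by push_cast; ring
  rw [Real.Gamma_nat_eq_factorial, h2, Real.rpow_natCast]

lemma tf_sq_integrable {a σ : ℝ} (hσ : 0 < σ) :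
    IntegrableOn (fun x => (tf a σ x)^2) (Ioi (0:ℝ)) := by
  have h := ((Jinteg_nat' (n := 2) (b := 2*σ) (by linarith)).const_mul (a^2))
  refine IntegrableOn.congr_fun h (fun x _ => (tf_sq a σ x).symm) measurableSet_Ioi

lemma tf_mass {a σ : ℝ} (hσ : 0 < σ) :
    ∫ x in Ioi (0:ℝ), (tf a σ x)^2 = a^2 / (4*σ^3) := by
  have h1 : ∫ x in Ioi (0:ℝ), (tf a σ x)^2
      = a^2 * ∫ x in Ioi (0:ℝ), x^2 * Real.exp (-(2*σ*x)) := by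
    rw [← integral_const_mul]
    exact setIntegral_congr_fun measurableSet_Ioi (fun x _ => tf_sq a σ x)
  rw [h1, Jval_nat' (by linarith)]
  have : (2*σ) ≠ 0 := by positivity
  simp only [Nat.factorial]; push_cast
  field_simp
  ring

lemma tf'_sq_integrable {a σ : ℝ} (hσ : 0 < σ) :
    IntegrableOn (fun x => (tf' a σ x)^2) (Ioi (0:ℝ)) := by
  have h0 := Jinteg_nat' (n := 0) (b := 2*σ) (by linarith)
  have h1 := Jinteg_nat' (n := 1) (b := 2*σ) (by linarith)
  have h2 := Jinteg_nat' (n := 2) (b := 2*σ) (by linarith)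
  have h : IntegrableOn (fun x =>
      a^2 * ((fun x => x^0 * Real.exp (-(2*σ*x))) x
        - 2*σ*((fun x => x^1 * Real.exp (-(2*σ*x))) x)
        + σ^2*((fun x => x^2 * Real.exp (-(2*σ*x))) x))) (Ioi (0:ℝ)) :=
    (((h0.sub (h1.const_mul (2*σ))).add (h2.const_mul (σ^2))).const_mul (a^2))
  refine IntegrableOn.congr_fun h (fun x _ => ?_) measurableSet_Ioi
  rw [tf'_sq]; ring

lemma tf_kin {a σ : ℝ} (hσ : 0 < σ) :
    ∫ x in Ioi (0:ℝ), (tf' a σ x)^2 = a^2 / (4*σ) := by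
  have h0 := Jinteg_nat' (n := 0) (b := 2*σ) (by linarith : (0:ℝ) < 2*σ)
  have h1 := Jinteg_nat' (n := 1) (b := 2*σ) (by linarith : (0:ℝ) < 2*σ)
  have h2 := Jinteg_nat' (n := 2) (b := 2*σ) (by linarith : (0:ℝ) < 2*σ)
  have key : ∫ x in Ioi (0:ℝ), (tf' a σ x)^2
      = ∫ x in Ioi (0:ℝ), (a^2 * (x^0 * Real.exp (-(2*σ*x)))
          - 2*σ*a^2 * (x^1 * Real.exp (-(2*σ*x)))
          + σ^2*a^2 * (x^2 * Real.exp (-(2*σ*x)))) := by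
    refine setIntegral_congr_fun measurableSet_Ioi (fun x _ => ?_)
    rw [tf'_sq]; ring
  have h01 : IntegrableOn (fun x => a^2 * (x^0 * Real.exp (-(2*σ*x)))
      - 2*σ*a^2 * (x^1 * Real.exp (-(2*σ*x)))) (Ioi (0:ℝ)) :=
    (h0.const_mul (a^2)).sub (h1.const_mul (2*σ*a^2))
  rw [key, integral_add h01 (h2.const_mul (σ^2*a^2)),
    integral_sub (h0.const_mul (a^2)) (h1.const_mul (2*σ*a^2)),
    integral_const_mul, integral_const_mul, integral_const_mul,
    Jval_nat' (by linarith : (0:ℝ) < 2*σ), Jval_nat' (by linarith : (0:ℝ) < 2*σ),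
    Jval_nat' (by linarith : (0:ℝ) < 2*σ)]
  have : (2*σ) ≠ 0 := by positivity
  simp only [Nat.factorial]; push_cast
  field_simp
  ring

lemma tf_abs_rpow (a σ p : ℝ) (ha : 0 ≤ a) {x : ℝ} (hx : 0 < x) :
    |tf a σ x| ^ p = a ^ p * (x ^ p * Real.exp (-(p*σ*x))) := by
  have hxe : (0:ℝ) ≤ x * Real.exp (-(σ*x)) := by positivity
  have habs : |tf a σ x| = a * (x * Real.exp (-(σ*x))) := by
    rw [abs_of_nonneg]; · rfl
    · exact mul_nonneg ha hxe
  rw [habs, Real.mul_rpow ha hxe, Real.mul_rpow hx.le (Real.exp_pos _).le,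
    ← Real.exp_mul]
  ring_nf

lemma tf_lp_integrable {a σ p : ℝ} (ha : 0 ≤ a) (hσ : 0 < σ) (hp : 0 < p) :
    IntegrableOn (fun x => |tf a σ x| ^ p) (Ioi (0:ℝ)) := by
  have h := (Jinteg' (s := p) (b := p*σ) (by linarith) (by positivity)).const_mul (a^p)
  refine IntegrableOn.congr_fun h (fun x hx => ?_) measurableSet_Ioi
  rw [tf_abs_rpow a σ p ha hx]

lemma tf_lp {a σ p : ℝ} (ha : 0 ≤ a) (hσ : 0 < σ) (hp : 0 < p) :
    ∫ x in Ioi (0:ℝ), |tf a σ x| ^ p = a^p * ((1/(p*σ)) ^ (p+1) * Real.Gamma (p+1)) := by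
  have key : ∫ x in Ioi (0:ℝ), |tf a σ x| ^ p
      = a^p * ∫ x in Ioi (0:ℝ), x ^ p * Real.exp (-(p*σ*x)) := by
    rw [← integral_const_mul]
    exact setIntegral_congr_fun measurableSet_Ioi (fun x hx => tf_abs_rpow a σ p ha hx)
  rw [key, Jval' (by linarith) (by positivity)]


lemma H1HalfLine_zero (p : ℝ) (hp : p ≠ 0) : H1HalfLine p (fun _ => 0) (fun _ => 0) := by
  have h0 : IntegrableOn (fun _ : ℝ => (0:ℝ)) (Ioi 0) := integrableOn_zero
  refine ⟨continuousOn_const, fun x y _ _ => intervalIntegrable_const, fun x y _ _ => by simp,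
    by simpa using h0, ?_, by simpa using h0⟩
  simp only [abs_zero, Real.zero_rpow hp]
  exact h0

lemma H1HalfLine_tf {p a σ : ℝ} (ha : 0 ≤ a) (hσ : 0 < σ) (hp : 0 < p) :
    H1HalfLine p (tf a σ) (tf' a σ) := by
  exact ⟨(tf_cont a σ).continuousOn,
    fun x y _ _ => (tf'_cont a σ).intervalIntegrable x y,
    fun x y _ _ => tf_ftc a σ x y,
    tf_sq_integrable hσ, tf_lp_integrable ha hσ hp, tf'_sq_integrable hσ⟩

lemma H1Edge_zero (p ℓ : ℝ) (hp : p ≠ 0) : H1Edge p ℓ (fun _ => 0) (fun _ => 0) := by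
  have h0 : IntegrableOn (fun _ : ℝ => (0:ℝ)) (Ioo 0 ℓ) := integrableOn_const measure_Ioo_lt_top.ne
  refine ⟨continuousOn_const, fun x _ y _ => intervalIntegrable_const, fun x _ y _ => by simp,
    by simpa using h0, ?_, by simpa using h0⟩
  simp only [abs_zero, Real.zero_rpow hp]
  exact h0

/-- test graph function: tf on the first half-line, zero elsewhere -/
def tgf (G : StarGraph) (hm : 0 < G.m) (a σ : ℝ) : GraphFun G where
  f := fun i => if i = ⟨0, hm⟩ then tf a σ else fun _ => 0
  f' := fun i => if i = ⟨0, hm⟩ then tf' a σ else fun _ => 0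
  g := fun _ _ => 0
  g' := fun _ _ => 0

lemma tgf_H1 {p : ℝ} (hp : 0 < p) (G : StarGraph) (hm : 0 < G.m) {a σ : ℝ}
    (ha : 0 ≤ a) (hσ : 0 < σ) : InH1G p G (tgf G hm a σ) := by
  refine ⟨fun i => ?_, fun j => H1Edge_zero p _ (ne_of_gt hp), fun i i' => ?_, fun i j => ?_,
    fun j j' => rfl⟩
  · rcases eq_or_ne i ⟨0, hm⟩ with h | h
    · simpa [tgf, h] using H1HalfLine_tf ha hσ hp
    · simpa [tgf, h] using H1HalfLine_zero p (ne_of_gt hp)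
  · rcases eq_or_ne i ⟨0, hm⟩ with h | h <;> rcases eq_or_ne i' ⟨0, hm⟩ with h' | h' <;>
      simp [tgf, h, h', tf]
  · rcases eq_or_ne i ⟨0, hm⟩ with h | h <;> simp [tgf, h, tf]


lemma tgf_mass (G : StarGraph) (hm : 0 < G.m) {a σ : ℝ} (hσ : 0 < σ) :
    massG G (tgf G hm a σ) = a^2 / (4*σ^3) := by
  unfold massG
  have h1 : ∀ i : Fin G.m, (∫ x in Ioi (0:ℝ), ((tgf G hm a σ).f i x)^2)
      = if i = ⟨0, hm⟩ then a^2/(4*σ^3) else 0 := by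
    intro i
    rcases eq_or_ne i ⟨0, hm⟩ with h | h
    · simp only [tgf, h, if_pos rfl]
      simpa using tf_mass (a := a) hσ
    · simp only [tgf, if_neg h]
      simp
  simp only [h1]
  simp [tgf]

lemma tgf_kin (G : StarGraph) (hm : 0 < G.m) {a σ : ℝ} (hσ : 0 < σ) :
    kinG G (tgf G hm a σ) = a^2 / (4*σ) := by
  unfold kinG
  have h1 : ∀ i : Fin G.m, (∫ x in Ioi (0:ℝ), ((tgf G hm a σ).f' i x)^2)
      = if i = ⟨0, hm⟩ then a^2/(4*σ) else 0 := by
    intro i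
    rcases eq_or_ne i ⟨0, hm⟩ with h | h
    · simp only [tgf, h, if_pos rfl]
      simpa using tf_kin (a := a) hσ
    · simp only [tgf, if_neg h]
      simp
  simp only [h1]
  simp [tgf]

lemma tgf_lp {p : ℝ} (hp : 0 < p) (G : StarGraph) (hm : 0 < G.m) {a σ : ℝ}
    (ha : 0 ≤ a) (hσ : 0 < σ) :
    lpG p G (tgf G hm a σ) = a^p * ((1/(p*σ)) ^ (p+1) * Real.Gamma (p+1)) := by
  unfold lpG
  have h1 : ∀ i : Fin G.m, (∫ x in Ioi (0:ℝ), |(tgf G hm a σ).f i x| ^ p)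
      = if i = ⟨0, hm⟩ then a^p * ((1/(p*σ)) ^ (p+1) * Real.Gamma (p+1)) else 0 := by
    intro i
    rcases eq_or_ne i ⟨0, hm⟩ with h | h
    · simp only [tgf, h, if_pos rfl]
      simpa using tf_lp ha hσ hp
    · simp only [tgf, if_neg h]
      simp [Real.zero_rpow (ne_of_gt hp)]
  simp only [h1]
  simp [tgf, Real.zero_rpow (ne_of_gt hp)]


/-- the coefficient `c₂ = 2^p Γ(p+1) / p^(p+2)` -/
def cc (p : ℝ) : ℝ := 2 ^ p * Real.Gamma (p+1) / p ^ (p+2)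

/-- the scale `s₀ = c₂^(2/(6-p))` -/
def ss (p : ℝ) : ℝ := cc p ^ (2/(6-p))

lemma cc_pos {p : ℝ} (hp : 0 < p) : 0 < cc p := by
  have h1 : 0 < Real.Gamma (p+1) := Real.Gamma_pos_of_pos (by linarith)
  have h2 : (0:ℝ) < 2 ^ p := Real.rpow_pos_of_pos (by norm_num) p
  have h3 : (0:ℝ) < p ^ (p+2) := Real.rpow_pos_of_pos hp _
  exact div_pos (mul_pos h2 h1) h3

lemma ss_pos {p : ℝ} (hp : 0 < p) : 0 < ss p := Real.rpow_pos_of_pos (cc_pos hp) _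

lemma tgf_energy {p : ℝ} (hp₁ : 2 < p) (hp₂ : p < 6) (G : StarGraph) (hm : 0 < G.m)
    {μ : ℝ} (hμ : 0 < μ) :
    energyG p G (tgf G hm
        (2*Real.sqrt (μ*(ss p * μ ^ ((p-2)/(6-p)))^3)) (ss p * μ ^ ((p-2)/(6-p))))
      = -((ss p)^2/2) * μ ^ (1+2*((p-2)/(6-p))) := by
  have hp : (0:ℝ) < p := by linarith
  have h6p : (0:ℝ) < 6 - p := by linarith
  set β : ℝ := (p-2)/(6-p) with hβ
  set σ : ℝ := ss p * μ ^ β with hσdef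
  have hσ : 0 < σ := mul_pos (ss_pos hp) (Real.rpow_pos_of_pos hμ _)
  set a : ℝ := 2*Real.sqrt (μ*σ^3) with hadef
  have hX : (0:ℝ) < μ*σ^3 := by positivity
  have ha : 0 < a := by positivity
  have ha2 : a^2 = 4*(μ*σ^3) := by
    rw [hadef, mul_pow, Real.sq_sqrt hX.le]; ring
  have hap : a^p = 2^p * (μ*σ^3) ^ (p/2) := by
    rw [hadef, Real.mul_rpow (by norm_num) (Real.sqrt_nonneg _),
      Real.rpow_def_of_pos (Real.sqrt_pos.mpr hX), Real.log_sqrt hX.le,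
      Real.rpow_def_of_pos hX]
    ring_nf
  rw [energyG, tgf_kin G hm hσ, tgf_lp hp G hm ha.le hσ, ha2, hap]
  have hXsplit : (μ*σ^3) ^ (p/2) = μ ^ (p/2) * σ ^ ((p-2)/2) * σ ^ (p+1) := by
    rw [Real.mul_rpow hμ.le (by positivity), ← Real.rpow_natCast σ 3,
      ← Real.rpow_mul hσ.le, mul_assoc, ← Real.rpow_add hσ]
    congr 1
    push_cast
    ring
  have hden : ((1:ℝ)/(p*σ)) ^ (p+1) = 1 / (p ^ (p+1) * σ ^ (p+1)) := by
    rw [Real.div_rpow (by norm_num) (by positivity) , Real.one_rpow,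
      Real.mul_rpow hp.le hσ.le]
  have hσp1 : σ ^ (p+1) ≠ 0 := ne_of_gt (Real.rpow_pos_of_pos hσ _)
  have hpp1 : (0:ℝ) < p ^ (p+1) := Real.rpow_pos_of_pos hp _
  have hlp : (1:ℝ)/p * (2^p * (μ*σ^3)^(p/2) * ((1/(p*σ))^(p+1) * Real.Gamma (p+1)))
      = (cc p * σ ^ ((p-2)/2)) * μ ^ (p/2) := by
    rw [hXsplit, hden, cc]
    have hpsplit : p ^ (p+2) = p ^ (p+1) * p := by
      rw [show p+2 = (p+1)+1 by ring, Real.rpow_add hp, Real.rpow_one]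
    rw [hpsplit]
    field_simp
  have h1 : ss p ^ ((p-2)/2) = cc p ^ ((p-2)/(6-p)) := by
    rw [ss, ← Real.rpow_mul (cc_pos hp).le]
    congr 1
    field_simp
  have h2 : cc p * cc p ^ ((p-2)/(6-p)) = (ss p)^2 := by
    have e1 : (ss p)^2 = cc p ^ (4/(6-p)) := by
      rw [ss, ← Real.rpow_natCast (cc p ^ (2/(6-p))) 2, ← Real.rpow_mul (cc_pos hp).le]
      congr 1
      push_cast
      field_simp
      norm_num
    rw [e1]
    nth_rewrite 1 [← Real.rpow_one (cc p)]
    rw [← Real.rpow_add (cc_pos hp)]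
    congr 1
    field_simp
    ring
  have hsexp : cc p * σ ^ ((p-2)/2) = (ss p)^2 * μ ^ (β*((p-2)/2)) := by
    rw [hσdef, Real.mul_rpow (ss_pos hp).le (Real.rpow_pos_of_pos hμ _).le,
      ← Real.rpow_mul hμ.le, h1, ← mul_assoc, h2]
  have hμcomb : μ ^ (β*((p-2)/2)) * μ ^ (p/2) = μ ^ (1+2*β) := by
    rw [← Real.rpow_add hμ]
    congr 1
    rw [hβ]
    field_simp
    ring
  have hσsq : μ * σ^2 = (ss p)^2 * μ ^ (1+2*β) := by
    have e2 : (μ ^ β)^2 = μ ^ (2*β) := by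
      rw [← Real.rpow_natCast (μ^β) 2, ← Real.rpow_mul hμ.le]
      congr 1
      push_cast
      ring
    rw [hσdef, mul_pow, e2, Real.rpow_add hμ, Real.rpow_one]
    ring
  rw [hlp, hsexp]
  rw [show (4*(μ*σ^3)/(4*σ)) = μ * σ^2 by field_simp, hσsq]
  rw [mul_assoc, hμcomb]
  ring



lemma exists_small {f : ℝ → ℝ} {c L m : ℝ} (hL : 0 < L)
    (hc : ContinuousOn f (Icc c (c+L)))
    (hint : IntegrableOn (fun x => f x ^2) (Ioo c (c+L)))
    (hm : ∫ x in Ioo c (c+L), f x ^2 ≤ m) :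
    ∃ y ∈ Icc c (c+L), (f y)^2 ≤ m / L := by
  have hne : (Icc c (c+L)).Nonempty := ⟨c, left_mem_Icc.mpr (by linarith)⟩
  obtain ⟨y, hy, hmin⟩ := isCompact_Icc.exists_isMinOn hne (hc.pow 2)
  refine ⟨y, hy, ?_⟩
  have hconst : ∫ _x in Ioo c (c+L), (f y)^2 = (f y)^2 * L := by
    rw [setIntegral_const, Real.volume_real_Ioo_of_le (by linarith), smul_eq_mul]
    ring
  have h1 : (f y)^2 * L ≤ ∫ x in Ioo c (c+L), f x^2 := by
    rw [← hconst]
    refine setIntegral_mono_on (integrableOn_const measure_Ioo_lt_top.ne) hint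
      measurableSet_Ioo (fun x hx => hmin (Ioo_subset_Icc_self hx))
  rw [le_div_iff₀ hL]
  linarith

lemma sq_setIntegral_abs_le {g : ℝ → ℝ} {K c d : ℝ} (hcd : c ≤ d) (hK0 : 0 ≤ K)
    (habs : IntegrableOn (fun x => |g x|) (Ioo c d))
    (hg2 : IntegrableOn (fun x => g x^2) (Ioo c d))
    (hK : ∫ x in Ioo c d, g x^2 ≤ K) :
    (∫ x in Ioo c d, |g x|)^2 ≤ (d-c)*K := by
  set A := ∫ x in Ioo c d, |g x| with hA
  have hA0 : 0 ≤ A := setIntegral_nonneg measurableSet_Ioo (fun x _ => abs_nonneg _)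
  have key : ∀ ε : ℝ, 0 < ε → 2*ε*A ≤ ε^2*(d-c) + K := by
    intro ε hε
    have hpt : ∀ x ∈ Ioo c d, 2*ε*|g x| ≤ ε^2 + g x^2 := by
      intro x _
      nlinarith [sq_nonneg (|g x| - ε), sq_abs (g x)]
    have hmono : ∫ x in Ioo c d, 2*ε*|g x| ≤ ∫ x in Ioo c d, (ε^2 + g x^2) :=
      setIntegral_mono_on (habs.const_mul _)
        ((integrableOn_const measure_Ioo_lt_top.ne).add hg2) measurableSet_Ioo hpt
    rw [integral_const_mul] at hmono
    rw [integral_add (integrableOn_const (C := ε^2) measure_Ioo_lt_top.ne) hg2,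
      setIntegral_const, Real.volume_real_Ioo_of_le (by linarith), smul_eq_mul] at hmono
    nlinarith
  rcases eq_or_lt_of_le hA0 with h0 | hApos
  · rw [← h0]
    simp only [ne_eq, OfNat.ofNat_ne_zero, not_false_eq_true, zero_pow]
    exact mul_nonneg (by linarith) hK0
  · rcases eq_or_lt_of_le hcd with heq | hlt
    · exfalso
      rw [hA, ← heq] at hApos
      simp at hApos
    · have hdc : 0 < d - c := by linarith
      have hk := key (A/(d-c)) (div_pos hApos hdc)
      have e1 : 2*(A/(d-c))*A = 2*A^2/(d-c) := by ring
      have e2 : (A/(d-c))^2*(d-c) = A^2/(d-c) := by field_simp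
      rw [e1, e2] at hk
      rw [div_add' _ _ _ (ne_of_gt hdc), div_le_div_iff₀ hdc hdc] at hk
      nlinarith

lemma window_bound {f f' : ℝ → ℝ} {c L m K : ℝ} (hL : 0 < L) (hm0 : 0 ≤ m) (hK0 : 0 ≤ K)
    (hcont : ContinuousOn f (Icc c (c+L)))
    (hftc : ∀ a ∈ Icc c (c+L), ∀ b ∈ Icc c (c+L), f b = f a + ∫ t in a..b, f' t)
    (hii : ∀ a ∈ Icc c (c+L), ∀ b ∈ Icc c (c+L), IntervalIntegrable f' volume a b)
    (hint2 : IntegrableOn (fun x => f x^2) (Ioo c (c+L)))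
    (hintd : IntegrableOn (fun x => f' x^2) (Ioo c (c+L)))
    (hmass : ∫ x in Ioo c (c+L), f x^2 ≤ m)
    (hkin : ∫ x in Ioo c (c+L), f' x^2 ≤ K) :
    ∀ x ∈ Icc c (c+L), (f x)^2 ≤ 2*(m/L) + 2*(L*K) := by
  intro x hx
  obtain ⟨y, hy, hy2⟩ := exists_small hL hcont hint2 hmass
  set a := min x y with ha
  set b := max x y with hb
  have hab : a ≤ b := min_le_max
  have haI : a ∈ Icc c (c+L) := by
    rcases min_choice x y with h | h <;> rw [ha, h] <;> assumption
  have hbI : b ∈ Icc c (c+L) := by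
    rcases max_choice x y with h | h <;> rw [hb, h] <;> assumption
  have hsub : Ioo a b ⊆ Ioo c (c+L) := fun t ht =>
    ⟨lt_of_le_of_lt haI.1 ht.1, lt_of_lt_of_le ht.2 hbI.2⟩
  -- the increment
  have hfxy : f x = f y + ∫ t in y..x, f' t := hftc y hy x hx
  have habs_int : IntegrableOn (fun t => |f' t|) (Ioo a b) := by
    have h1 : IntegrableOn f' (Ioo a b) := by
      exact (hii a haI b hbI).1.mono_set Ioo_subset_Ioc_self
    exact h1.abs
  have hint2ab : IntegrableOn (fun t => f' t^2) (Ioo a b) := hintd.mono_set hsub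
  have hKab : ∫ t in Ioo a b, f' t^2 ≤ K := by
    refine le_trans (setIntegral_mono_set hintd ?_ (HasSubset.Subset.eventuallyLE hsub)) hkin
    · filter_upwards with t using sq_nonneg _
  have hA2 : (∫ t in Ioo a b, |f' t|)^2 ≤ (b-a)*K :=
    sq_setIntegral_abs_le hab hK0 habs_int hint2ab hKab
  have hA0 : 0 ≤ ∫ t in Ioo a b, |f' t| := setIntegral_nonneg measurableSet_Ioo (fun t _ => abs_nonneg _)
  have hABle : |∫ t in y..x, f' t| ≤ ∫ t in Ioo a b, |f' t| := by
    calc |∫ t in y..x, f' t| ≤ ∫ t in uIoc y x, |f' t| := by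
          simpa [Real.norm_eq_abs] using
            intervalIntegral.norm_integral_le_integral_norm_uIoc (f := f') (a := y) (b := x) (μ := volume)
      _ = ∫ t in Ioc a b, |f' t| := by rw [uIoc_comm]; rfl
      _ = ∫ t in Ioo a b, |f' t| := integral_Ioc_eq_integral_Ioo
  have hba : b - a ≤ L := by
    have := haI.1; have := hbI.2; linarith
  have hI2 : (∫ t in y..x, f' t)^2 ≤ L*K := by
    have h1 : (∫ t in y..x, f' t)^2 ≤ (∫ t in Ioo a b, |f' t|)^2 := by
      rw [← sq_abs]
      exact pow_le_pow_left₀ (abs_nonneg _) hABle 2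
    calc (∫ t in y..x, f' t)^2 ≤ (b-a)*K := le_trans h1 hA2
      _ ≤ L*K := mul_le_mul_of_nonneg_right hba hK0
  rw [hfxy]
  nlinarith [hy2, hI2, sq_nonneg (f y - ∫ t in y..x, f' t)]


lemma setint_sq_nonneg (h : ℝ → ℝ) (s : Set ℝ) (hs : MeasurableSet s) :
    0 ≤ ∫ x in s, (h x)^2 :=
  setIntegral_nonneg hs (fun x _ => sq_nonneg _)

lemma setint_mono_sub {h : ℝ → ℝ} {s t : Set ℝ} (hst : s ⊆ t)
    (hint : IntegrableOn (fun x => (h x)^2) t) :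
    ∫ x in s, (h x)^2 ≤ ∫ x in t, (h x)^2 :=
  setIntegral_mono_set hint (ae_of_all _ (fun x => sq_nonneg _))
    (HasSubset.Subset.eventuallyLE hst)

lemma massG_nonneg {G : StarGraph} (u : GraphFun G) : 0 ≤ massG G u := by
  unfold massG
  have h1 : 0 ≤ ∑ i, ∫ x in Ioi (0:ℝ), (u.f i x)^2 :=
    Finset.sum_nonneg (fun i _ => setint_sq_nonneg _ _ measurableSet_Ioi)
  have h2 : 0 ≤ ∑ j, ∫ x in Ioo 0 (G.ℓ j), (u.g j x)^2 :=
    Finset.sum_nonneg (fun j _ => setint_sq_nonneg _ _ measurableSet_Ioo)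
  linarith

lemma kinG_nonneg {G : StarGraph} (u : GraphFun G) : 0 ≤ kinG G u := by
  unfold kinG
  have h1 : 0 ≤ ∑ i, ∫ x in Ioi (0:ℝ), (u.f' i x)^2 :=
    Finset.sum_nonneg (fun i _ => setint_sq_nonneg _ _ measurableSet_Ioi)
  have h2 : 0 ≤ ∑ j, ∫ x in Ioo 0 (G.ℓ j), (u.g' j x)^2 :=
    Finset.sum_nonneg (fun j _ => setint_sq_nonneg _ _ measurableSet_Ioo)
  linarith

lemma lpG_nonneg {p : ℝ} {G : StarGraph} (u : GraphFun G) : 0 ≤ lpG p G u := by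
  unfold lpG
  have h1 : 0 ≤ ∑ i, ∫ x in Ioi (0:ℝ), |u.f i x| ^ p :=
    Finset.sum_nonneg (fun i _ => setIntegral_nonneg measurableSet_Ioi
      (fun x _ => Real.rpow_nonneg (abs_nonneg _) _))
  have h2 : 0 ≤ ∑ j, ∫ x in Ioo 0 (G.ℓ j), |u.g j x| ^ p :=
    Finset.sum_nonneg (fun j _ => setIntegral_nonneg measurableSet_Ioo
      (fun x _ => Real.rpow_nonneg (abs_nonneg _) _))
  linarith

lemma comp_f_mass_le {G : StarGraph} (u : GraphFun G) (i : Fin G.m) :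
    ∫ x in Ioi (0:ℝ), (u.f i x)^2 ≤ massG G u := by
  unfold massG
  have h1 : (∫ x in Ioi (0:ℝ), (u.f i x)^2) ≤ ∑ i, ∫ x in Ioi (0:ℝ), (u.f i x)^2 :=
    Finset.single_le_sum (f := fun i => ∫ x in Ioi (0:ℝ), (u.f i x)^2)
      (fun i _ => setint_sq_nonneg _ _ measurableSet_Ioi) (Finset.mem_univ i)
  have h2 : 0 ≤ ∑ j, ∫ x in Ioo 0 (G.ℓ j), (u.g j x)^2 :=
    Finset.sum_nonneg (fun j _ => setint_sq_nonneg _ _ measurableSet_Ioo)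
  linarith

lemma comp_g_mass_le {G : StarGraph} (u : GraphFun G) (j : Fin G.k) :
    ∫ x in Ioo 0 (G.ℓ j), (u.g j x)^2 ≤ massG G u := by
  unfold massG
  have h1 : (∫ x in Ioo 0 (G.ℓ j), (u.g j x)^2) ≤ ∑ j, ∫ x in Ioo 0 (G.ℓ j), (u.g j x)^2 :=
    Finset.single_le_sum (f := fun j => ∫ x in Ioo 0 (G.ℓ j), (u.g j x)^2)
      (fun j _ => setint_sq_nonneg _ _ measurableSet_Ioo) (Finset.mem_univ j)
  have h2 : 0 ≤ ∑ i, ∫ x in Ioi (0:ℝ), (u.f i x)^2 :=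
    Finset.sum_nonneg (fun i _ => setint_sq_nonneg _ _ measurableSet_Ioi)
  linarith

lemma comp_f_kin_le {G : StarGraph} (u : GraphFun G) (i : Fin G.m) :
    ∫ x in Ioi (0:ℝ), (u.f' i x)^2 ≤ kinG G u := by
  unfold kinG
  have h1 : (∫ x in Ioi (0:ℝ), (u.f' i x)^2) ≤ ∑ i, ∫ x in Ioi (0:ℝ), (u.f' i x)^2 :=
    Finset.single_le_sum (f := fun i => ∫ x in Ioi (0:ℝ), (u.f' i x)^2)
      (fun i _ => setint_sq_nonneg _ _ measurableSet_Ioi) (Finset.mem_univ i)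
  have h2 : 0 ≤ ∑ j, ∫ x in Ioo 0 (G.ℓ j), (u.g' j x)^2 :=
    Finset.sum_nonneg (fun j _ => setint_sq_nonneg _ _ measurableSet_Ioo)
  linarith

lemma comp_g_kin_le {G : StarGraph} (u : GraphFun G) (j : Fin G.k) :
    ∫ x in Ioo 0 (G.ℓ j), (u.g' j x)^2 ≤ kinG G u := by
  unfold kinG
  have h1 : (∫ x in Ioo 0 (G.ℓ j), (u.g' j x)^2) ≤ ∑ j, ∫ x in Ioo 0 (G.ℓ j), (u.g' j x)^2 :=
    Finset.single_le_sum (f := fun j => ∫ x in Ioo 0 (G.ℓ j), (u.g' j x)^2)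
      (fun j _ => setint_sq_nonneg _ _ measurableSet_Ioo) (Finset.mem_univ j)
  have h2 : 0 ≤ ∑ i, ∫ x in Ioi (0:ℝ), (u.f' i x)^2 :=
    Finset.sum_nonneg (fun i _ => setint_sq_nonneg _ _ measurableSet_Ioi)
  linarith


lemma incr_sq_le {g : ℝ → ℝ} {K L y x : ℝ} (hK0 : 0 ≤ K) (hL : |x - y| ≤ L)
    (hii : IntervalIntegrable g volume y x)
    (hint2 : IntegrableOn (fun t => (g t)^2) (Ioo (y ⊓ x) (y ⊔ x)))
    (hK : ∫ t in Ioo (y ⊓ x) (y ⊔ x), (g t)^2 ≤ K) :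
    (∫ t in y..x, g t)^2 ≤ L*K := by
  set a := y ⊓ x with ha
  set b := y ⊔ x with hb
  have hab : a ≤ b := min_le_max
  have habs_int : IntegrableOn (fun t => |g t|) (Ioo a b) := by
    have h1 : IntegrableOn g (Ioo a b) := by
      rcases le_total y x with h | h
      · exact (hii.1).mono_set (by rw [ha, hb, min_eq_left h, max_eq_right h]; exact Ioo_subset_Ioc_self)
      · exact (hii.2).mono_set (by rw [ha, hb, min_eq_right h, max_eq_left h]; exact Ioo_subset_Ioc_self)
    exact h1.abs
  have hA2 : (∫ t in Ioo a b, |g t|)^2 ≤ (b-a)*K :=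
    sq_setIntegral_abs_le hab hK0 habs_int hint2 hK
  have hABle : |∫ t in y..x, g t| ≤ ∫ t in Ioo a b, |g t| := by
    calc |∫ t in y..x, g t| ≤ ∫ t in uIoc y x, |g t| := by
          simpa [Real.norm_eq_abs] using
            intervalIntegral.norm_integral_le_integral_norm_uIoc (f := g) (a := y) (b := x) (μ := volume)
      _ = ∫ t in Ioc a b, |g t| := by rfl
      _ = ∫ t in Ioo a b, |g t| := integral_Ioc_eq_integral_Ioo
  have hba : b - a ≤ L := by
    rcases le_total y x with h | h
    · rw [ha, hb, min_eq_left h, max_eq_right h]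
      rw [abs_of_nonneg (by linarith)] at hL
      linarith
    · rw [ha, hb, min_eq_right h, max_eq_left h]
      rw [abs_of_nonpos (by linarith)] at hL
      linarith
  have h1 : (∫ t in y..x, g t)^2 ≤ (∫ t in Ioo a b, |g t|)^2 := by
    rw [← sq_abs]
    exact pow_le_pow_left₀ (abs_nonneg _) hABle 2
  calc (∫ t in y..x, g t)^2 ≤ (b-a)*K := le_trans h1 hA2
    _ ≤ L*K := mul_le_mul_of_nonneg_right hba hK0


lemma global_sup {p : ℝ} {G : StarGraph} (hm : 0 < G.m) {u : GraphFun G}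
    (hu : InH1G p G u) {L : ℝ} (hL : 0 < L) :
    (∀ i : Fin G.m, ∀ x : ℝ, 0 ≤ x →
        (u.f i x)^2 ≤ 8*(massG G u/L + L*(kinG G u))) ∧
    (∀ j : Fin G.k, ∀ x ∈ Icc 0 (G.ℓ j),
        (u.g j x)^2 ≤ 8*(massG G u/L + L*(kinG G u))) := by
  set μ := massG G u with hμdef
  set K := kinG G u with hKdef
  have hμ0 : 0 ≤ μ := massG_nonneg u
  have hK0 : 0 ≤ K := kinG_nonneg u
  have hf := hu.1
  have hg := hu.2.1
  -- half-line bound, precise form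
  have hP1 : ∀ i : Fin G.m, ∀ x : ℝ, 0 ≤ x → (u.f i x)^2 ≤ 2*(μ/L) + 2*(L*K) := by
    intro i x hx
    have hIccsub : Icc x (x+L) ⊆ Ici (0:ℝ) := fun t ht => le_trans hx ht.1
    have hIoosub : Ioo x (x+L) ⊆ Ioi (0:ℝ) := fun t ht => lt_of_le_of_lt hx ht.1
    refine window_bound hL (by positivity) hK0
      ((hf i).1.mono hIccsub)
      (fun a ha b hb => (hf i).2.2.1 a b (hIccsub ha) (hIccsub hb))
      (fun a ha b hb => (hf i).2.1 a b (hIccsub ha) (hIccsub hb))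
      ((hf i).2.2.2.1.mono_set hIoosub)
      ((hf i).2.2.2.2.2.mono_set hIoosub)
      (le_trans (setint_mono_sub hIoosub (hf i).2.2.2.1) (comp_f_mass_le u i))
      (le_trans (setint_mono_sub hIoosub (hf i).2.2.2.2.2) (comp_f_kin_le u i))
      x (left_mem_Icc.mpr (by linarith))
  refine ⟨fun i x hx => le_trans (hP1 i x hx) (by nlinarith [div_nonneg hμ0 hL.le, mul_nonneg hL.le hK0]), ?_⟩
  intro j x hx
  set ℓ := G.ℓ j with hℓdef
  have hℓ : 0 < ℓ := G.ℓ_pos j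
  have hIccℓ : ∀ a ∈ Icc (0:ℝ) ℓ, ∀ b ∈ Icc (0:ℝ) ℓ, u.g j b = u.g j a + ∫ t in a..b, u.g' j t :=
    fun a ha b hb => (hg j).2.2.1 a ha b hb
  rcases le_or_gt ℓ (2*L) with hcase | hcase
  · -- short edge : compare with the vertex
    have h0m : (0:ℝ) ∈ Icc (0:ℝ) ℓ := left_mem_Icc.mpr hℓ.le
    have hxm : x ∈ Icc (0:ℝ) ℓ := hx
    have hftc0 : u.g j x = u.g j 0 + ∫ t in (0:ℝ)..x, u.g' j t := hIccℓ 0 h0m x hxm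
    have hIoosub : Ioo ((0:ℝ) ⊓ x) ((0:ℝ) ⊔ x) ⊆ Ioo 0 ℓ := by
      rw [min_eq_left hx.1, max_eq_right hx.1]
      exact fun t ht => ⟨ht.1, lt_of_lt_of_le ht.2 hx.2⟩
    have hI2 : (∫ t in (0:ℝ)..x, u.g' j t)^2 ≤ (2*L)*K := by
      refine incr_sq_le hK0 ?_ ((hg j).2.1 0 h0m x hxm)
        ((hg j).2.2.2.2.2.mono_set hIoosub)
        (le_trans (setint_mono_sub hIoosub (hg j).2.2.2.2.2) (comp_g_kin_le u j))
      rw [abs_of_nonneg (by linarith [hx.1])]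
      linarith [hx.2]
    have hvertex : (u.g j 0)^2 ≤ 2*(μ/L) + 2*(L*K) := by
      have := hP1 ⟨0, hm⟩ 0 le_rfl
      rwa [hu.2.2.2.1 ⟨0, hm⟩ j] at this
    rw [hftc0]
    nlinarith [hI2, hvertex, sq_nonneg (u.g j 0 - ∫ t in (0:ℝ)..x, u.g' j t),
      div_nonneg hμ0 hL.le, mul_nonneg hL.le hK0]
  · -- long edge : interior window
    set c := min x (ℓ - L) with hcdef
    have hc0 : 0 ≤ c := le_min hx.1 (by linarith)
    have hcL : c + L ≤ ℓ := by
      have : c ≤ ℓ - L := min_le_right _ _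
      linarith
    have hxc : x ∈ Icc c (c+L) := by
      constructor
      · exact min_le_left _ _
      · rcases le_total x (ℓ - L) with h | h
        · rw [hcdef, min_eq_left h]; linarith
        · rw [hcdef, min_eq_right h]; linarith [hx.2]
    have hIccsub : Icc c (c+L) ⊆ Icc 0 ℓ := fun t ht => ⟨le_trans hc0 ht.1, le_trans ht.2 hcL⟩
    have hIoosub : Ioo c (c+L) ⊆ Ioo 0 ℓ := fun t ht =>
      ⟨lt_of_le_of_lt hc0 ht.1, lt_of_lt_of_le ht.2 hcL⟩
    have := window_bound hL (by positivity) hK0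
      ((hg j).1.mono hIccsub)
      (fun a ha b hb => hIccℓ a (hIccsub ha) b (hIccsub hb))
      (fun a ha b hb => (hg j).2.1 a (hIccsub ha) b (hIccsub hb))
      ((hg j).2.2.2.1.mono_set hIoosub)
      ((hg j).2.2.2.2.2.mono_set hIoosub)
      (le_trans (setint_mono_sub hIoosub (hg j).2.2.2.1) (comp_g_mass_le u j))
      (le_trans (setint_mono_sub hIoosub (hg j).2.2.2.2.2) (comp_g_kin_le u j))
      x hxc
    nlinarith [this, div_nonneg hμ0 hL.le, mul_nonneg hL.le hK0]


lemma abs_rpow_le_of_sq_le {p v B : ℝ} (hp : 2 < p) (hB : 0 ≤ B) (h : v^2 ≤ B) :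
    |v| ^ p ≤ B^((p-2)/2) * v^2 := by
  rcases eq_or_ne v 0 with rfl | hv
  · rw [abs_zero, Real.zero_rpow (by linarith)]
    positivity
  · have hva : 0 < |v| := abs_pos.mpr hv
    have e1 : |v| ^ p = |v| ^ (p-2) * v^2 := by
      rw [← sq_abs v, ← Real.rpow_natCast |v| 2, ← Real.rpow_add hva]
      norm_num
    rw [e1]
    refine mul_le_mul_of_nonneg_right ?_ (sq_nonneg v)
    have e2 : |v| ^ (p-2) = (v^2) ^ ((p-2)/2) := by
      rw [← sq_abs, ← Real.rpow_natCast |v| 2, ← Real.rpow_mul (abs_nonneg v)]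
      congr 1
      push_cast
      ring
    rw [e2]
    exact Real.rpow_le_rpow (sq_nonneg v) h (by linarith)

lemma lp_le {p : ℝ} (hp : 2 < p) {G : StarGraph} {u : GraphFun G} (hu : InH1G p G u)
    {B : ℝ} (hB : 0 ≤ B)
    (hbf : ∀ i : Fin G.m, ∀ x : ℝ, 0 ≤ x → (u.f i x)^2 ≤ B)
    (hbg : ∀ j : Fin G.k, ∀ x ∈ Icc 0 (G.ℓ j), (u.g j x)^2 ≤ B) :
    lpG p G u ≤ B^((p-2)/2) * massG G u := by
  have hcomp_f : ∀ i : Fin G.m, (∫ x in Ioi (0:ℝ), |u.f i x| ^ p)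
      ≤ B^((p-2)/2) * ∫ x in Ioi (0:ℝ), (u.f i x)^2 := by
    intro i
    rw [← integral_const_mul]
    refine setIntegral_mono_on (hu.1 i).2.2.2.2.1 ((hu.1 i).2.2.2.1.const_mul _)
      measurableSet_Ioi (fun x hx => ?_)
    exact abs_rpow_le_of_sq_le hp hB (hbf i x (le_of_lt hx))
  have hcomp_g : ∀ j : Fin G.k, (∫ x in Ioo 0 (G.ℓ j), |u.g j x| ^ p)
      ≤ B^((p-2)/2) * ∫ x in Ioo 0 (G.ℓ j), (u.g j x)^2 := by
    intro j
    rw [← integral_const_mul]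
    refine setIntegral_mono_on (hu.2.1 j).2.2.2.2.1 ((hu.2.1 j).2.2.2.1.const_mul _)
      measurableSet_Ioo (fun x hx => ?_)
    exact abs_rpow_le_of_sq_le hp hB (hbg j x ⟨hx.1.le, hx.2.le⟩)
  unfold lpG massG
  rw [mul_add, Finset.mul_sum, Finset.mul_sum]
  exact add_le_add (Finset.sum_le_sum (fun i _ => hcomp_f i))
    (Finset.sum_le_sum (fun j _ => hcomp_g j))


def C3 (p : ℝ) : ℝ := (2/p) * (16:ℝ)^((p-2)/2)
def C4 (p : ℝ) : ℝ := C3 p ^ (4/(6-p))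
def C5 (p : ℝ) : ℝ := (16:ℝ)^((p-2)/2) * C4 p ^ ((p-2)/4)

lemma C3_pos {p : ℝ} (hp : 0 < p) : 0 < C3 p :=
  mul_pos (by positivity) (Real.rpow_pos_of_pos (by norm_num) _)

lemma C4_pos {p : ℝ} (hp : 0 < p) : 0 < C4 p := Real.rpow_pos_of_pos (C3_pos hp) _

lemma C5_pos {p : ℝ} (hp : 0 < p) : 0 < C5 p :=
  mul_pos (Real.rpow_pos_of_pos (by norm_num) _) (Real.rpow_pos_of_pos (C4_pos hp) _)

lemma energyG_eq (p : ℝ) (G : StarGraph) (u : GraphFun G) :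
    energyG p G u = 1/2 * kinG G u - 1/p * lpG p G u := rfl

lemma kin_pos_of_groundish {p : ℝ} (hp₁ : 2 < p) (hp₂ : p < 6) {G : StarGraph}
    (hm' : 0 < G.m) {μ : ℝ} (hμ : 0 < μ) {u : GraphFun G} (hu : InH1G p G u)
    (hmass : massG G u = μ)
    (hE : energyG p G u ≤ -((ss p)^2/2) * μ ^ (1+2*((p-2)/(6-p)))) :
    0 < kinG G u := by
  have hp : (0:ℝ) < p := by linarith
  rcases (kinG_nonneg u).lt_or_eq with h | h
  · exact h
  exfalso
  have hμβ : (0:ℝ) < μ ^ (1+2*((p-2)/(6-p))) := Real.rpow_pos_of_pos hμ _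
  have hss2 : (0:ℝ) < (ss p)^2 := pow_pos (ss_pos hp) 2
  have hEeq := energyG_eq p G u
  have hPpos : 0 < lpG p G u := by
    rw [hEeq, ← h] at hE
    have h1 : (1:ℝ)/p * lpG p G u ≥ (ss p)^2/2 * μ ^ (1+2*((p-2)/(6-p))) := by linarith
    nlinarith [mul_pos hss2 hμβ, (one_div_pos.mpr hp)]
  set P := lpG p G u with hPdef
  set X := (P/(2*μ)) ^ (2/(p-2)) with hXdef
  have hX : 0 < X := Real.rpow_pos_of_pos (div_pos hPpos (by positivity)) _
  set L := 8*μ/X with hLdef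
  have hL : 0 < L := div_pos (by positivity) hX
  obtain ⟨hsf, hsg⟩ := global_sup hm' hu hL
  have hBnn : 0 ≤ 8*(massG G u/L + L*(kinG G u)) := by
    rw [hmass, ← h]
    positivity
  have hP_le := lp_le hp₁ hu hBnn hsf hsg
  rw [hmass, ← h] at hP_le
  have hBX : 8*(μ/L + L*0) = X := by
    rw [hLdef]
    field_simp
    ring
  rw [hBX] at hP_le
  have hp2 : p - 2 ≠ 0 := by linarith
  have hXpow : X ^ ((p-2)/2) = P/(2*μ) := by
    rw [hXdef, ← Real.rpow_mul (by positivity : (0:ℝ) ≤ P/(2*μ)),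
      show (2/(p-2))*((p-2)/2) = (1:ℝ) by field_simp, Real.rpow_one]
  rw [hXpow] at hP_le
  have : P ≤ P/2 := by
    calc P ≤ P/(2*μ)*μ := hP_le
      _ = P/2 := by field_simp
  linarith


lemma lp_upper {p : ℝ} (hp₁ : 2 < p) (hp₂ : p < 6) {G : StarGraph}
    (hm' : 0 < G.m) {μ : ℝ} (hμ : 0 < μ) {u : GraphFun G} (hu : InH1G p G u)
    (hmass : massG G u = μ)
    (hE : energyG p G u ≤ -((ss p)^2/2) * μ ^ (1+2*((p-2)/(6-p)))) :
    lpG p G u ≤ C5 p * μ ^ (1+2*((p-2)/(6-p))) := by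
  have hp : (0:ℝ) < p := by linarith
  have h6p : (0:ℝ) < 6 - p := by linarith
  have hKpos : 0 < kinG G u := kin_pos_of_groundish hp₁ hp₂ hm' hμ hu hmass hE
  set β : ℝ := (p-2)/(6-p) with hβdef
  set θ : ℝ := (p-2)/4 with hθdef
  set K := kinG G u with hKdef
  set P := lpG p G u with hPdef
  have hK0 : 0 ≤ K := hKpos.le
  have hP0 : 0 ≤ P := lpG_nonneg u
  -- the scale L = √(μ/K)
  set sμ := Real.sqrt μ with hsμdef
  set sK := Real.sqrt K with hsKdef
  have hsμ : 0 < sμ := Real.sqrt_pos.mpr hμ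
  have hsK : 0 < sK := Real.sqrt_pos.mpr hKpos
  have hμeq : sμ*sμ = μ := Real.mul_self_sqrt hμ.le
  have hKeq : sK*sK = K := Real.mul_self_sqrt hK0
  set L := sμ/sK with hLdef
  have hL : 0 < L := div_pos hsμ hsK
  have hB : 8*(μ/L + L*K) = 16*(sμ*sK) := by
    rw [hLdef, ← hμeq, ← hKeq]
    field_simp
    ring
  obtain ⟨hsf, hsg⟩ := global_sup hm' hu hL
  have hBnn : 0 ≤ 8*(massG G u/L + L*K) := by
    rw [hmass]; positivity
  have hP_le := lp_le hp₁ hu hBnn hsf hsg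
  rw [hmass, hB] at hP_le
  -- hP_le : P ≤ (16*(sμ*sK))^((p-2)/2) * μ
  have hss : (sμ*sK) ^ ((p-2)/2) = (μ*K) ^ θ := by
    have h1 : sμ*sK = (μ*K) ^ ((1:ℝ)/2) := by
      rw [← Real.sqrt_eq_rpow, Real.sqrt_mul hμ.le]
    rw [h1, ← Real.rpow_mul (by positivity)]
    congr 1
    rw [hθdef]; ring
  have hsplit : ((16:ℝ)*(sμ*sK))^((p-2)/2) = 16^((p-2)/2) * (μ*K)^θ := by
    rw [Real.mul_rpow (by norm_num) (by positivity), hss]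
  rw [hsplit] at hP_le
  -- energy nonpositive gives K ≤ (2/p) P
  have hE0 : energyG p G u ≤ 0 := by
    refine le_trans hE ?_
    have h1 : (0:ℝ) < (ss p)^2/2 * μ ^ (1+2*β) :=
      mul_pos (div_pos (pow_pos (ss_pos hp) 2) (by norm_num)) (Real.rpow_pos_of_pos hμ _)
    linarith
  have hKP : K ≤ 2/p * P := by
    have := energyG_eq p G u
    rw [this] at hE0
    have h2 : 1/2*K ≤ 1/p*P := by linarith
    calc K = 2*(1/2*K) := by ring
      _ ≤ 2*(1/p*P) := by linarith
      _ = 2/p * P := by ring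
  -- chain : K ≤ C3 μ^(1+θ) K^θ
  have hμθ : (0:ℝ) < μ ^ θ := Real.rpow_pos_of_pos hμ _
  have hKθ : (0:ℝ) < K ^ θ := Real.rpow_pos_of_pos hKpos _
  have hK1 : K ≤ C3 p * μ^(1+θ) * K^θ := by
    have step : K ≤ 2/p * (16^((p-2)/2) * (μ*K)^θ * μ) := by
      refine le_trans hKP ?_
      have : (0:ℝ) < 2/p := by positivity
      exact mul_le_mul_of_nonneg_left hP_le this.le
    calc K ≤ 2/p * (16^((p-2)/2) * (μ*K)^θ * μ) := step
      _ = C3 p * μ^(1+θ) * K^θ := by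
          rw [C3, Real.mul_rpow hμ.le hK0, Real.rpow_add hμ, Real.rpow_one]
          ring
  have hK2 : K ^ ((6-p)/4) ≤ C3 p * μ^(1+θ) := by
    have hsplitK : K = K^((6-p)/4) * K^θ := by
      rw [← Real.rpow_add hKpos, hθdef, show (6-p)/4 + (p-2)/4 = (1:ℝ) by ring, Real.rpow_one]
    refine le_of_mul_le_mul_right ?_ hKθ
    calc K^((6-p)/4) * K^θ = K := hsplitK.symm
      _ ≤ C3 p * μ^(1+θ) * K^θ := hK1
  have hK3 : K ≤ C4 p * μ^(1+2*β) := by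
    have hr : (0:ℝ) ≤ 4/(6-p) := by positivity
    have := Real.rpow_le_rpow (by positivity) hK2 hr
    rw [← Real.rpow_mul hK0, show ((6-p)/4) * (4/(6-p)) = (1:ℝ) by field_simp, Real.rpow_one] at this
    rw [Real.mul_rpow (C3_pos hp).le (Real.rpow_pos_of_pos hμ _).le, ← Real.rpow_mul hμ.le] at this
    rw [C4]
    convert this using 3
    rw [hθdef, hβdef]
    field_simp
    ring
  -- final : P ≤ C5 μ^(1+2β)
  have hμK : (μ*K)^θ ≤ C4 p ^ θ * μ^((2+2*β)*θ) := by
    have h1 : μ*K ≤ μ * (C4 p * μ^(1+2*β)) := mul_le_mul_of_nonneg_left hK3 hμ.le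
    have h2 := Real.rpow_le_rpow (by positivity) h1 (by rw [hθdef]; linarith : (0:ℝ) ≤ θ)
    refine le_trans h2 (le_of_eq ?_)
    rw [show μ * (C4 p * μ^(1+2*β)) = C4 p * (μ * μ^(1+2*β)) by ring,
      Real.mul_rpow (C4_pos hp).le (by positivity),
      show μ * μ^(1+2*β) = μ^(1:ℝ) * μ^(1+2*β) by rw [Real.rpow_one],
      ← Real.rpow_add hμ, ← Real.rpow_mul hμ.le]
    congr 2
    ring
  have hfin : P ≤ C5 p * μ ^ (1+2*β) := by
    calc P ≤ 16^((p-2)/2) * (μ*K)^θ * μ := hP_le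
      _ ≤ 16^((p-2)/2) * (C4 p ^ θ * μ^((2+2*β)*θ)) * μ := by
          refine mul_le_mul_of_nonneg_right (mul_le_mul_of_nonneg_left hμK (by positivity)) hμ.le
      _ = C5 p * (μ^((2+2*β)*θ) * μ^(1:ℝ)) := by
          rw [C5, Real.rpow_one, hθdef]
          ring
      _ = C5 p * μ ^ (1+2*β) := by
          rw [← Real.rpow_add hμ]
          congr 2
          rw [hθdef, hβdef]
          field_simp
          ring
  exact hfin


lemma ground_energy_le {p : ℝ} (hp₁ : 2 < p) (hp₂ : p < 6) {G : StarGraph}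
    (hm' : 0 < G.m) {μ : ℝ} (hμ : 0 < μ) {u : GraphFun G}
    (hgs : IsGroundState p G μ u) :
    energyG p G u ≤ -((ss p)^2/2) * μ ^ (1+2*((p-2)/(6-p))) := by
  have hp : (0:ℝ) < p := by linarith
  have hσ : 0 < ss p * μ ^ ((p-2)/(6-p)) :=
    mul_pos (ss_pos hp) (Real.rpow_pos_of_pos hμ _)
  have hmass_t : massG G (tgf G hm'
      (2*Real.sqrt (μ*(ss p * μ ^ ((p-2)/(6-p)))^3)) (ss p * μ ^ ((p-2)/(6-p)))) = μ := by
    rw [tgf_mass G hm' hσ, mul_pow, Real.sq_sqrt (by positivity)]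
    have hσ3 : (ss p * μ ^ ((p-2)/(6-p)))^3 ≠ 0 := by positivity
    have hss0 : ss p ≠ 0 := (ss_pos hp).ne'
    field_simp
    ring
  have h1 := hgs.2.2 _ (tgf_H1 hp G hm' (by positivity) hσ) hmass_t
  exact le_trans h1 (le_of_eq (tgf_energy hp₁ hp₂ G hm' hμ))

-- AUX END

/-- Corollary 2.8, estimate (20): there is `C_p > 0`, depending only
on `p ∈ (2,6)`, such that for every star graph `G` with at least one half-line, every
`μ > 0` and every ground state `u` of mass `μ`, the Lagrange multiplier
`λ = μ⁻¹(‖u‖^p_{L^p} − ‖u'‖²_{L²})` satisfies `C⁻¹ μ^{2β} ≤ λ ≤ C μ^{2β}`. -/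
theorem lagrange_multiplier_estimate (p : ℝ) (hp₁ : 2 < p) (hp₂ : p < 6) :
    ∃ C : ℝ, 0 < C ∧
      ∀ G : StarGraph, 1 ≤ G.m → ∀ μ : ℝ, 0 < μ →
        ∀ u : GraphFun G, IsGroundState p G μ u →
          C⁻¹ * μ ^ (2 * ((p - 2) / (6 - p))) ≤ μ⁻¹ * (lpG p G u - kinG G u) ∧
          μ⁻¹ * (lpG p G u - kinG G u) ≤ C * μ ^ (2 * ((p - 2) / (6 - p))) := by
  have hp : (0:ℝ) < p := by linarith
  have hss2 : (0:ℝ) < (ss p)^2 := pow_pos (ss_pos hp) 2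
  set C : ℝ := max (C5 p) (((ss p)^2)⁻¹) with hCdef
  have hC : 0 < C := lt_of_lt_of_le (inv_pos.mpr hss2) (le_max_right _ _)
  refine ⟨C, hC, ?_⟩
  intro G hm μ hμ u hgs
  have hm' : 0 < G.m := hm
  have hu := hgs.1
  have hmass := hgs.2.1
  have hE := ground_energy_le hp₁ hp₂ hm' hμ hgs
  set β : ℝ := (p-2)/(6-p) with hβdef
  set K := kinG G u with hKdef
  set P := lpG p G u with hPdef
  have hK0 : 0 ≤ K := kinG_nonneg u
  have hP0 : 0 ≤ P := lpG_nonneg u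
  have hμβ : (0:ℝ) < μ ^ (2*β) := Real.rpow_pos_of_pos hμ _
  have hμ1β : (0:ℝ) < μ ^ (1+2*β) := Real.rpow_pos_of_pos hμ _
  have hμsplit : μ ^ (1+2*β) = μ * μ ^ (2*β) := by
    rw [Real.rpow_add hμ, Real.rpow_one]
  -- lower bound
  have hEeq := energyG_eq p G u
  rw [hEeq] at hE
  have h2p : 2*(1/p*P) ≤ P := by
    have h1 : (2:ℝ)/p ≤ 1 := by
      rw [div_le_one hp]; linarith
    calc 2*(1/p*P) = (2/p)*P := by ring
      _ ≤ 1*P := mul_le_mul_of_nonneg_right h1 hP0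
      _ = P := one_mul P
  have hPK : (ss p)^2 * μ^(1+2*β) ≤ P - K := by linarith
  have hlow : C⁻¹ * μ ^ (2*β) ≤ μ⁻¹ * (P - K) := by
    have h1 : C⁻¹ ≤ (ss p)^2 := by
      calc C⁻¹ ≤ (((ss p)^2)⁻¹)⁻¹ := inv_anti₀ (inv_pos.mpr hss2) (le_max_right _ _)
        _ = (ss p)^2 := inv_inv _
    have h2 : μ⁻¹ * ((ss p)^2 * μ^(1+2*β)) = (ss p)^2 * μ^(2*β) := by
      rw [hμsplit]
      field_simp
    calc C⁻¹ * μ ^ (2*β) ≤ (ss p)^2 * μ ^ (2*β) := mul_le_mul_of_nonneg_right h1 hμβ.le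
      _ = μ⁻¹ * ((ss p)^2 * μ^(1+2*β)) := h2.symm
      _ ≤ μ⁻¹ * (P - K) := mul_le_mul_of_nonneg_left hPK (by positivity)
  -- upper bound
  have hPle : P ≤ C5 p * μ ^ (1+2*β) := lp_upper hp₁ hp₂ hm' hμ hu hmass (by rw [hEeq]; exact hE)
  have hhigh : μ⁻¹ * (P - K) ≤ C * μ ^ (2*β) := by
    have h3 : μ⁻¹ * (C5 p * μ^(1+2*β)) = C5 p * μ^(2*β) := by
      rw [hμsplit]
      field_simp
    calc μ⁻¹ * (P - K) ≤ μ⁻¹ * P := by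
          refine mul_le_mul_of_nonneg_left (by linarith) (by positivity)
      _ ≤ μ⁻¹ * (C5 p * μ^(1+2*β)) := mul_le_mul_of_nonneg_left hPle (by positivity)
      _ = C5 p * μ^(2*β) := h3
      _ ≤ C * μ^(2*β) := mul_le_mul_of_nonneg_right (le_max_left _ _) hμβ.le
  exact ⟨hlow, hhigh⟩
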